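/- Let φ : X → Y be a local homeomorphism between locally compact Hausdorff spaces and let K ⊆ X be compact. Then for every y₀ ∈ Y there exist an open neighbourhood V of y₀, an integer m ≥ 0, and pairwise disjoint open sets U₁, …, U_m ⊆ X such that φ⁻¹(V) ∩ K ⊆ U₁ ∪ ⋯ ∪ U_m and for each i the restriction of φ to U_i is a homeomorphism from U_i onto V. (Lemma 2.1.3.) -/

import Mathlib

open Set

/-- **Lemma 2.1.3.** Let `φ : X → Y` be a local homeomorphism between locally compact
Hausdorff spaces, and let `K ⊆ X` be compact. For every `y₀ ∈ Y` there exist an open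
neighbourhood `V` of `y₀`, an integer `m ≥ 0`, and pairwise disjoint open sets
`U 0, …, U (m-1) ⊆ X` such that `φ ⁻¹' V ∩ K ⊆ ⋃ i, U i` and for each `i` the
restriction `φ|_{U i} : U i → V` is a homeomorphism. -/
theorem localHomeomorph_fiber_cover {X Y : Type*} [TopologicalSpace X] [TopologicalSpace Y]
    [LocallyCompactSpace X] [T2Space X] [LocallyCompactSpace Y] [T2Space Y]
    (φ : X → Y) (hφ : IsLocalHomeomorph φ) (K : Set X) (hK : IsCompact K) (y₀ : Y) :
    ∃ (V : Set Y), IsOpen V ∧ y₀ ∈ V ∧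
      ∃ (m : ℕ) (U : Fin m → Set X),
        (∀ i, IsOpen (U i)) ∧
        Pairwise (Function.onFun Disjoint U) ∧
        φ ⁻¹' V ∩ K ⊆ ⋃ i, U i ∧
        ∀ i, ∃ e : PartialHomeomorph X Y,
          e.source = U i ∧ e.target = V ∧ ∀ x ∈ U i, e x = φ x := by
  classical
  choose e hmem heq using hφ
  set F : Set X := K ∩ φ ⁻¹' {y₀} with hFdef
  have hFy : ∀ x ∈ F, φ x = y₀ := fun x hx => hx.2
  have hFc : IsCompact F := hK.inter_right (isClosed_singleton.preimage
    (IsLocalHomeomorph.continuous (fun x => ⟨e x, hmem x, heq x⟩)))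
  -- F is finite
  have hcover : F ⊆ ⋃ x ∈ F, (e x).source := fun z hz => mem_biUnion hz (hmem z)
  obtain ⟨t, htF, htfin, hcov⟩ := hFc.elim_finite_subcover_image
    (fun x _ => (e x).open_source) hcover
  have hFfin : F.Finite := by
    refine htfin.subset fun z hz => ?_
    obtain ⟨x, hxt, hzx⟩ := mem_iUnion₂.1 (hcov hz)
    have hex : (e x) z = (e x) x := by
      rw [← congrFun (heq x) z, ← congrFun (heq x) x, hFy z hz, hFy x (htF hxt)]
    have : z = x := (e x).injOn hzx (hmem x) hex
    rwa [this]
  -- enumerate F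
  set s : Finset X := hFfin.toFinset with hsdef
  set m : ℕ := s.card with hmdef
  set p : Fin m → X := fun i => ((s.equivFin.symm i : {x // x ∈ s}) : X) with hpdef
  have hpF : ∀ i, p i ∈ F := fun i => by
    have := (s.equivFin.symm i).2
    simp [hsdef, hpdef] at this ⊢; exact hFfin.mem_toFinset.1 (by simp)
  have hpinj : Function.Injective p :=
    Subtype.val_injective.comp s.equivFin.symm.injective
  have hFp : F ⊆ range p := by
    intro z hz
    have hzs : z ∈ s := hFfin.mem_toFinset.2 hz
    exact ⟨s.equivFin ⟨z, hzs⟩, by simp [hpdef]⟩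
  -- disjoint open sets around the points of F
  obtain ⟨W, hW, hWd⟩ := hFfin.t2_separation
  -- restricted charts
  set f : Fin m → OpenPartialHomeomorph X Y :=
    fun i => (e (p i)).restrOpen (W (p i)) (hW (p i)).2 with hfdef
  have hfsrc : ∀ i, (f i).source = (e (p i)).source ∩ W (p i) := fun i =>
    OpenPartialHomeomorph.restrOpen_source _ _ _
  have hfmem : ∀ i, p i ∈ (f i).source := fun i =>
    (hfsrc i) ▸ ⟨hmem (p i), (hW (p i)).1⟩
  have hfcoe : ∀ i, ⇑(f i) = ⇑(e (p i)) := fun i => rfl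
  have hfφ : ∀ i, ∀ x, (f i) x = φ x := fun i x => by
    rw [hfcoe i, ← congrFun (heq (p i)) x]
  have hy₀tgt : ∀ i, y₀ ∈ (f i).target := fun i => by
    have := (f i).map_source (hfmem i)
    rwa [hfφ i (p i), hFy (p i) (hpF i)] at this
  -- the bad compact set
  set C : Set X := K \ ⋃ i, (f i).source with hCdef
  have hCc : IsCompact C := hK.diff (isOpen_iUnion fun i => (f i).open_source)
  have hy₀C : y₀ ∉ φ '' C := by
    rintro ⟨x, ⟨hxK, hxU⟩, hxy⟩
    have hxF : x ∈ F := ⟨hxK, by simpa using hxy⟩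
    obtain ⟨i, hi⟩ := hFp hxF
    exact hxU (mem_iUnion.2 ⟨i, hi ▸ hfmem i⟩)
  set V : Set Y := (φ '' C)ᶜ ∩ ⋂ i, (f i).target with hVdef
  have hVopen : IsOpen V := by
    refine IsOpen.inter ?_ (isOpen_iInter_of_finite fun i => (f i).open_target)
    exact (hCc.image (IsLocalHomeomorph.continuous
      (fun x => ⟨e x, hmem x, heq x⟩))).isClosed.isOpen_compl
  have hy₀V : y₀ ∈ V := ⟨hy₀C, mem_iInter.2 hy₀tgt⟩
  have hVtgt : ∀ i, V ⊆ (f i).target := fun i hy hyV =>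
    mem_iInter.1 hyV.2 i
  -- final charts
  set g : Fin m → OpenPartialHomeomorph X Y :=
    fun i => (f i).restrOpen (φ ⁻¹' V) (hVopen.preimage
      (IsLocalHomeomorph.continuous (fun x => ⟨e x, hmem x, heq x⟩))) with hgdef
  set U : Fin m → Set X := fun i => (g i).source with hUdef
  have hUsrc : ∀ i, U i = (f i).source ∩ φ ⁻¹' V := fun i =>
    OpenPartialHomeomorph.restrOpen_source _ _ _
  refine ⟨V, hVopen, hy₀V, m, U, fun i => (g i).open_source, ?_, ?_, ?_⟩
  · -- pairwise disjoint
    intro i j hij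
    have hd : Disjoint (W (p i)) (W (p j)) :=
      hWd (hpF i) (hpF j) (fun h => hij (hpinj h))
    exact hd.mono (by rw [hUsrc i, hfsrc i]; intro x hx; exact hx.1.2)
      (by rw [hUsrc j, hfsrc j]; intro x hx; exact hx.1.2)
  · -- covering
    rintro x ⟨hxV, hxK⟩
    have hxC : x ∉ C := fun hxC => hxV.1 ⟨x, hxC, rfl⟩
    have : x ∈ ⋃ i, (f i).source := by
      by_contra h
      exact hxC ⟨hxK, h⟩
    obtain ⟨i, hi⟩ := mem_iUnion.1 this
    exact mem_iUnion.2 ⟨i, (hUsrc i) ▸ ⟨hi, hxV⟩⟩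
  · -- each chart
    intro i
    refine ⟨(g i).toPartialHomeomorph, rfl, ?_, fun x _ => hfφ i x⟩
    -- target = V
    have htgt : (g i).target = (f i).target ∩ (f i).symm ⁻¹' (φ ⁻¹' V) := by
      rw [hgdef]
      simp only [OpenPartialHomeomorph.restrOpen_toPartialEquiv]
      exact PartialEquiv.restr_target _ _
    rw [htgt]
    apply Subset.antisymm
    · rintro y ⟨hyt, hysymm⟩
      have : φ ((f i).symm y) = y := by
        rw [← hfφ i ((f i).symm y)]
        exact (f i).right_inv hyt
      rwa [← this]
    · intro y hyV
      refine ⟨hVtgt i hyV, ?_⟩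
      have : φ ((f i).symm y) = y := by
        rw [← hfφ i ((f i).symm y)]
        exact (f i).right_inv (hVtgt i hyV)
      simpa [this] using hyV
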